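/- For every semantic information source 𝒳 = {X_n} at precision level δ(·), there exists a semantic source coding system that correctly codes at precision level δ(·) with code length ℓ(n) satisfying: for every ε > 0 there is n₀ such that for all n > n₀, SA(X_n, δ(n)) ≤ ℓ(n) < SA(X_n, δ(n)) + ε. -/

import Mathlib

def IsPmf {α : Type} [Fintype α] (p : α → ℝ) : Prop :=
  (∀ x, 0 ≤ p x) ∧ ∑ x, p x = 1

noncomputable def SD {α : Type} [Fintype α] (p q : α → ℝ) : ℝ :=
  (∑ x, |p x - q x|) / 2

/-- Boolean circuits over the basis {AND, OR, NOT}. -/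
inductive Circ (ι : Type) : Type
  | input : ι → Circ ι
  | and : Circ ι → Circ ι → Circ ι
  | or : Circ ι → Circ ι → Circ ι
  | not : Circ ι → Circ ι

def Circ.eval {ι : Type} : Circ ι → (ι → Bool) → Bool
  | .input i, v => v i
  | .and a b, v => a.eval v && b.eval v
  | .or a b, v => a.eval v || b.eval v
  | .not a, v => !(a.eval v)

def Circ.size {ι : Type} : Circ ι → ℕ
  | .input _ => 1
  | .and a b => a.size + b.size + 1
  | .or a b => a.size + b.size + 1
  | .not a => a.size + 1

/-- The logic-and-universe part `(C̄, u)` of an oc-circuit for a family of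
distributions: a step circuit with universe input `u`, an `Ns`-bit state,
an `Nm`-bit per-step semantics (or received-data) input, `Nr` fresh random
bits per step and `Ly` output bits per step. -/
structure OCLogic : Type where
  Nu : ℕ
  Ns : ℕ
  Nm : ℕ
  Nr : ℕ
  Ly : ℕ
  circ : Fin Ns ⊕ Fin Ly → Circ (Fin Nu ⊕ Fin Ns ⊕ Fin Nm ⊕ Fin Nr)
  u : Fin Nu → Bool
  s1 : Fin Ns → Bool

def OCLogic.step (c : OCLogic) (s : Fin c.Ns → Bool) (m : Fin c.Nm → Bool)
    (r : Fin c.Nr → Bool) : (Fin c.Ns → Bool) × (Fin c.Ly → Bool) :=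
  let env : Fin c.Nu ⊕ Fin c.Ns ⊕ Fin c.Nm ⊕ Fin c.Nr → Bool :=
    Sum.elim c.u (Sum.elim s (Sum.elim m r))
  (fun i => (c.circ (Sum.inl i)).eval env, fun j => (c.circ (Sum.inr j)).eval env)

def OCLogic.run (c : OCLogic) : List (Fin c.Nm → Bool) →
    List (Fin c.Nr → Bool) → (Fin c.Ns → Bool) → List (Fin c.Ly → Bool)
  | [], _, _ => []
  | _ :: _, [], _ => []
  | m :: ms', r :: rs, s =>
    (c.step s m r).2 :: OCLogic.run c ms' rs (c.step s m r).1

/-- Number of steps producing `n` output bits: `⌈n / Ly⌉`. -/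
def OCLogic.K (c : OCLogic) (n : ℕ) : ℕ := (n + c.Ly - 1) / c.Ly

/-- `n`-bit output of the iterated circuit on the semantics stream `sem`
and random blocks `rs`. -/
def OCLogic.outFun (c : OCLogic) (sem : ℕ → Fin c.Nm → Bool) (n : ℕ)
    (rs : List (Fin c.Nr → Bool)) : Fin n → Bool :=
  fun t =>
    let ys := c.run (List.ofFn fun i : Fin (c.K n) => sem (i : ℕ)) rs c.s1
    let y := ys.getD ((t : ℕ) / c.Ly) (fun _ => false)
    if h : (t : ℕ) % c.Ly < c.Ly then y ⟨(t : ℕ) % c.Ly, h⟩ else false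

/-- Output distribution on `{0,1}^n` of the oc-circuit `(C̄, u, n, sem)`. -/
noncomputable def OCLogic.outDist (c : OCLogic) (sem : ℕ → Fin c.Nm → Bool)
    (n : ℕ) : (Fin n → Bool) → ℝ :=
  fun x =>
    ((Finset.univ.filter (fun rs : Fin (c.K n) → Fin c.Nr → Bool =>
        c.outFun sem n (List.ofFn rs) = x)).card : ℝ) / 2 ^ (c.K n * c.Nr)

/-- Description length `|(C̄, u, m⃗_n)|` of the logic, universe, and the
semantics prefix used for an `n`-bit output. -/
def OCLogic.len (c : OCLogic) (n : ℕ) : ℕ :=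
  (∑ j : Fin c.Ns ⊕ Fin c.Ly, (c.circ j).size) + c.Nu + c.Ns +
    c.K n * c.Nm + 8

/-- A semantic information source at precision level `δ(·)`: a family of
distributions `X = {X_n}` admitting a proper oc-circuit — a single logic,
universe and infinite semantics stream whose `n`-bit output is `δ(n)`-close
to `X_n` for every `n`, and which for all sufficiently large `n` is shortest
among all (logic, universe, semantics-prefix) triples simulating `X_n`. -/
structure SemSource (δ : ℕ → ℝ) (X : (n : ℕ) → (Fin n → Bool) → ℝ) : Type where
  L : OCLogic
  sem : ℕ → Fin L.Nm → Bool
  close : ∀ n, SD (L.outDist sem n) (X n) ≤ δ n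
  n0 : ℕ
  minimal : ∀ n, n0 ≤ n → ∀ (L' : OCLogic) (sem' : ℕ → Fin L'.Nm → Bool),
    SD (L'.outDist sem' n) (X n) ≤ δ n → L.len n ≤ L'.len n

/-- Semantic information amount `SA(X_n, δ(n)) = ⌈n · N_m / L_y⌉` of the
proper logic of the source. -/
def SemSource.SA {δ : ℕ → ℝ} {X : (n : ℕ) → (Fin n → Bool) → ℝ}
    (S : SemSource δ X) (n : ℕ) : ℕ :=
  (n * S.L.Nm + S.L.Ly - 1) / S.L.Ly

/-- The receiver of a semantic source coding system is a conditional
oc-circuit without semantics input: its `Nm`-slot is fed by consecutive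
blocks of the transmitted message. -/
def msgBlocks (R : OCLogic) (msg : ℕ → Bool) : ℕ → Fin R.Nm → Bool :=
  fun i j => msg (i * R.Nm + (j : ℕ))

/-- Extend a finite transmitted string to an infinite one (padding by 0). -/
def extendMsg {ℓ : ℕ} (z : Fin ℓ → Bool) : ℕ → Bool :=
  fun t => if h : t < ℓ then z ⟨t, h⟩ else false

/-- A semantic source coding system `(ℓ, Snd, R)` correctly codes `X` at
precision level `δ(·)` if, for all sufficiently large `n`, the receiver's
output on the transmitted `ℓ(n)`-bit data is `δ(n)`-close to `X_n`. -/
def CorrectlyCodes (δ : ℕ → ℝ) (X : (n : ℕ) → (Fin n → Bool) → ℝ)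
    (ℓ : ℕ → ℕ) (Snd : (n : ℕ) → Fin (ℓ n) → Bool) (R : OCLogic) : Prop :=
  ∃ n0 : ℕ, ∀ n, n0 ≤ n →
    SD (R.outDist (msgBlocks R (extendMsg (Snd n))) n) (X n) ≤ δ n

/- ===== auxiliary machinery ===== -/

def Circ.map {ι ι' : Type} (f : ι → ι') : Circ ι → Circ ι'
  | .input i => .input (f i)
  | .and a b => .and (a.map f) (b.map f)
  | .or a b => .or (a.map f) (b.map f)
  | .not a => .not (a.map f)

theorem Circ.eval_map {ι ι' : Type} (f : ι → ι') (c : Circ ι) (v : ι' → Bool) :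
    (c.map f).eval v = c.eval (v ∘ f) := by
  induction c <;> simp [Circ.map, Circ.eval, *] <;> rfl

def remapIdx (L : OCLogic) :
    (Fin L.Nu ⊕ Fin L.Ns ⊕ Fin L.Nm ⊕ Fin L.Nr) →
    (Fin L.Nu ⊕ Fin (L.Ns + L.Nm) ⊕ Fin L.Nm ⊕ Fin L.Nr) :=
  Sum.elim (fun u => Sum.inl u)
    (Sum.elim (fun s => Sum.inr (Sum.inl (Fin.castAdd L.Nm s)))
      (Sum.elim (fun m => Sum.inr (Sum.inl (Fin.natAdd L.Ns m)))
        (fun r => Sum.inr (Sum.inr (Sum.inr r)))))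

/-- The buffered receiver: simulates `L`, keeping the current semantics
block in an `Nm`-bit buffer in the state; the incoming message block is
stored into the buffer for the next step. -/
def buffered (L : OCLogic) (b0 : Fin L.Nm → Bool) : OCLogic where
  Nu := L.Nu
  Ns := L.Ns + L.Nm
  Nm := L.Nm
  Nr := L.Nr
  Ly := L.Ly
  circ := Sum.elim
    (fun i => Fin.addCases (motive := fun _ => Circ _)
        (fun i0 => (L.circ (Sum.inl i0)).map (remapIdx L))
        (fun j => Circ.input (Sum.inr (Sum.inr (Sum.inl j)))) i)
    (fun j => (L.circ (Sum.inr j)).map (remapIdx L))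
  u := L.u
  s1 := Fin.addCases L.s1 b0

theorem buffered_step (L : OCLogic) (b0 : Fin L.Nm → Bool)
    (s : Fin L.Ns → Bool) (b : Fin L.Nm → Bool) (m : Fin L.Nm → Bool)
    (r : Fin L.Nr → Bool) :
    (buffered L b0).step (Fin.addCases s b) m r =
      (Fin.addCases (L.step s b r).1 m, (L.step s b r).2) := by
  have henv : (Sum.elim L.u
      (Sum.elim (Fin.addCases s b) (Sum.elim m r))) ∘ remapIdx L =
      Sum.elim L.u (Sum.elim s (Sum.elim b r)) := by
    funext x
    rcases x with u | x
    · rfl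
    rcases x with i | x
    · simp [remapIdx, buffered, Function.comp]
    rcases x with j | rr
    · simp [remapIdx, buffered, Function.comp]
    · rfl
  refine Prod.ext ?_ ?_
  · funext i
    induction i using Fin.addCases with
    | left i =>
      show ((buffered L b0).circ (Sum.inl (Fin.castAdd L.Nm i))).eval _ = _
      simp only [buffered, Sum.elim_inl, Fin.addCases_left, Circ.eval_map, henv,
        Fin.addCases_left]
      rfl
    | right j =>
      show ((buffered L b0).circ (Sum.inl (Fin.natAdd L.Ns j))).eval _ = _
      simp only [buffered, Sum.elim_inl, Fin.addCases_right, Circ.eval, Sum.elim_inr]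
  · funext j
    show ((buffered L b0).circ (Sum.inr j)).eval _ = _
    show ((L.circ (Sum.inr j)).map (remapIdx L)).eval _ = _
    exact (Circ.eval_map _ _ _).trans (congrArg _ henv)

theorem buffered_run (L : OCLogic) (b0 : Fin L.Nm → Bool) :
    ∀ (rs : List (Fin L.Nr → Bool)) (ms : List (Fin L.Nm → Bool))
      (s : Fin L.Ns → Bool) (b : Fin L.Nm → Bool),
      rs.length ≤ ms.length →
      (buffered L b0).run ms rs (Fin.addCases s b) = L.run (b :: ms) rs s := by
  intro rs
  induction rs with
  | nil => intro ms s b _; cases ms <;> rfl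
  | cons r rs ih =>
    intro ms s b h
    cases ms with
    | nil => simp at h
    | cons m ms' =>
      show ((buffered L b0).step (Fin.addCases s b) m r).2 ::
          (buffered L b0).run ms' rs ((buffered L b0).step (Fin.addCases s b) m r).1
        = (L.step s b r).2 :: L.run (m :: ms') rs (L.step s b r).1
      rw [buffered_step]
      simp only
      congr 1
      exact ih ms' (L.step s b r).1 m (by simpa using Nat.le_of_succ_le_succ h)

theorem run_take (c : OCLogic) :
    ∀ (rs : List (Fin c.Nr → Bool)) (ms : List (Fin c.Nm → Bool))
      (s : Fin c.Ns → Bool),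
      c.run ms rs s = c.run (ms.take rs.length) rs s := by
  intro rs
  induction rs with
  | nil => intro ms s; cases ms <;> rfl
  | cons r rs ih =>
    intro ms s
    cases ms with
    | nil => rfl
    | cons m ms' =>
      show (c.step s m r).2 :: c.run ms' rs (c.step s m r).1 = _
      simp only [List.length_cons, List.take_succ_cons]
      show _ = (c.step s m r).2 :: c.run (ms'.take rs.length) rs (c.step s m r).1
      rw [← ih]

theorem outDist_congr (c : OCLogic) (sem sem' : ℕ → Fin c.Nm → Bool) (n : ℕ)
    (h : ∀ i : ℕ, i < c.K n → sem i = sem' i) :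
    c.outDist sem n = c.outDist sem' n := by
  have hof : ∀ rs : List (Fin c.Nr → Bool),
      c.outFun sem n rs = c.outFun sem' n rs := by
    intro rs
    unfold OCLogic.outFun
    rw [show (List.ofFn fun i : Fin (c.K n) => sem (i : ℕ))
        = List.ofFn fun i : Fin (c.K n) => sem' (i : ℕ) from
      congrArg _ (funext fun i => h i i.isLt)]
  funext x
  unfold OCLogic.outDist
  rw [Finset.filter_congr (fun rs _ => by rw [hof])]

theorem buffered_outDist (L : OCLogic) (b0 : Fin L.Nm → Bool)
    (sem' semL : ℕ → Fin L.Nm → Bool) (n : ℕ)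
    (hlist : (b0 :: List.ofFn fun i : Fin ((buffered L b0).K n) => sem' (i : ℕ)).take (L.K n)
      = List.ofFn fun i : Fin (L.K n) => semL (i : ℕ)) :
    (buffered L b0).outDist sem' n = L.outDist semL n := by
  have hrun' : ∀ rs : List (Fin L.Nr → Bool), rs.length = L.K n →
      (buffered L b0).run (List.ofFn fun i : Fin ((buffered L b0).K n) => sem' (i : ℕ)) rs
          ((buffered L b0).s1)
        = L.run (List.ofFn fun i : Fin (L.K n) => semL (i : ℕ)) rs L.s1 := by
    intro rs hlen
    calc (show List (Fin L.Ly → Bool) from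
          (buffered L b0).run (List.ofFn fun i : Fin ((buffered L b0).K n) => sem' (i : ℕ)) rs
          ((buffered L b0).s1))
        = L.run (b0 :: List.ofFn fun i : Fin ((buffered L b0).K n) => sem' (i : ℕ)) rs L.s1 :=
          buffered_run L b0 rs _ L.s1 b0 (le_of_eq (hlen.trans List.length_ofFn.symm))
      _ = L.run ((b0 :: List.ofFn fun i : Fin ((buffered L b0).K n) => sem' (i : ℕ)).take rs.length)
            rs L.s1 := run_take L rs _ L.s1
      _ = L.run (List.ofFn fun i : Fin (L.K n) => semL (i : ℕ)) rs L.s1 := by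
          rw [hlen, hlist]
  have hOF : ∀ rs : List (Fin L.Nr → Bool), rs.length = L.K n →
      (buffered L b0).outFun sem' n rs = L.outFun semL n rs := by
    intro rs hlen
    unfold OCLogic.outFun
    rw [hrun' rs hlen]
    rfl
  funext x
  unfold OCLogic.outDist
  have hfil : (Finset.univ.filter fun rs : Fin ((buffered L b0).K n) → Fin (buffered L b0).Nr → Bool =>
        (buffered L b0).outFun sem' n (List.ofFn rs) = x)
      = Finset.univ.filter fun rs : Fin ((buffered L b0).K n) → Fin (buffered L b0).Nr → Bool =>
        L.outFun semL n (List.ofFn rs) = x :=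
    Finset.filter_congr fun rs _ => by
      exact iff_of_eq (congrArg (· = x) (hOF (List.ofFn rs) List.length_ofFn))
  rw [hfil]
  rfl

/-- semantic source coding theorem (achievability). For every
semantic information source there is a coding system that correctly codes
at precision level `δ(·)` with code length `ℓ(n)` satisfying
`SA(X_n, δ(n)) ≤ ℓ(n) < SA(X_n, δ(n)) + ε` for all sufficiently large `n`. -/
theorem semantic_source_coding (δ : ℕ → ℝ) (X : (n : ℕ) → (Fin n → Bool) → ℝ)
    (hX : ∀ n, IsPmf (X n)) (S : SemSource δ X) :
    ∃ (ℓ : ℕ → ℕ) (Snd : (n : ℕ) → Fin (ℓ n) → Bool) (R : OCLogic),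
      CorrectlyCodes δ X ℓ Snd R ∧
      ∀ ε : ℝ, 0 < ε → ∃ n0 : ℕ, ∀ n, n0 < n →
        (S.SA n : ℝ) ≤ (ℓ n : ℝ) ∧ (ℓ n : ℝ) < (S.SA n : ℝ) + ε := by
  by_cases hdeg : S.L.Nm = 0 ∨ S.L.Ly = 0
  · refine ⟨S.SA, fun n _ => false, S.L, ⟨0, fun n _ => ?_⟩,
      fun ε hε => ⟨0, fun n _ => ⟨le_refl _, by linarith⟩⟩⟩
    rw [outDist_congr S.L _ S.sem n ?_]
    · exact S.close n
    · intro i hi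
      rcases hdeg with h0 | h0
      · funext j; exact absurd j.isLt (by simp [h0])
      · exfalso; unfold OCLogic.K at hi; rw [h0] at hi; simp at hi
  · push_neg at hdeg
    have hNm : 0 < S.L.Nm := Nat.pos_of_ne_zero hdeg.1
    have hLy : 0 < S.L.Ly := Nat.pos_of_ne_zero hdeg.2
    have keyAr : ∀ n i j : ℕ, j < S.L.Nm → i + 1 < S.L.K n →
        i * S.L.Nm + j < S.SA n := by
      intro n i j hj hi
      have hn : 1 ≤ n := by
        by_contra hn
        have hn0 : n = 0 := by omega
        subst hn0
        have : S.L.K 0 = 0 := Nat.div_eq_of_lt (by omega)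
        omega
      have hK : S.L.K n = (n - 1) / S.L.Ly + 1 := by
        unfold OCLogic.K
        rw [show n + S.L.Ly - 1 = (n - 1) + S.L.Ly by omega, Nat.add_div_right _ hLy]
      have hi' : i + 1 ≤ (n - 1) / S.L.Ly := by
        rw [hK] at hi
        exact Nat.lt_succ_iff.mp hi
      have h1 : i * S.L.Nm + j < (i + 1) * S.L.Nm := by
        rw [Nat.succ_mul]
        exact Nat.add_lt_add_left hj _
      have h2 : (i + 1) * S.L.Nm ≤ ((n - 1) / S.L.Ly) * S.L.Nm :=
        Nat.mul_le_mul_right _ hi'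
      have h3 : ((n - 1) / S.L.Ly) * S.L.Nm ≤ ((n - 1) * S.L.Nm) / S.L.Ly := by
        rw [Nat.le_div_iff_mul_le hLy]
        calc (n - 1) / S.L.Ly * S.L.Nm * S.L.Ly
            = (n - 1) / S.L.Ly * S.L.Ly * S.L.Nm := by ring
          _ ≤ (n - 1) * S.L.Nm := Nat.mul_le_mul_right _ (Nat.div_mul_le_self _ _)
      have h4 : ((n - 1) * S.L.Nm) / S.L.Ly ≤ S.SA n := by
        unfold SemSource.SA
        apply Nat.div_le_div_right
        have h5 : (n - 1) * S.L.Nm ≤ n * S.L.Nm :=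
          Nat.mul_le_mul_right _ (Nat.sub_le _ _)
        omega
      exact lt_of_lt_of_le h1 (le_trans h2 (le_trans h3 h4))
    refine ⟨S.SA,
      fun n p => S.sem ((p : ℕ) / S.L.Nm + 1)
        ⟨(p : ℕ) % S.L.Nm, Nat.mod_lt _ hNm⟩,
      buffered S.L (S.sem 0), ⟨0, fun n _ => ?_⟩,
      fun ε hε => ⟨0, fun n _ => ⟨le_refl _, by linarith⟩⟩⟩
    have hlist : (S.sem 0 :: List.ofFn fun i : Fin ((buffered S.L (S.sem 0)).K n) =>
          msgBlocks (buffered S.L (S.sem 0))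
            (extendMsg (fun p : Fin (S.SA n) => S.sem ((p : ℕ) / S.L.Nm + 1)
              ⟨(p : ℕ) % S.L.Nm, Nat.mod_lt _ hNm⟩)) (i : ℕ)).take (S.L.K n)
        = List.ofFn fun i : Fin (S.L.K n) => S.sem (i : ℕ) := by
      apply List.ext_getElem
      · simp only [List.length_take, List.length_cons, List.length_ofFn]
        have : (buffered S.L (S.sem 0)).K n = S.L.K n := rfl
        have h3 : (@List.ofFn (Fin S.L.Nm → Bool) ((buffered S.L (S.sem 0)).K n) fun i =>
            msgBlocks (buffered S.L (S.sem 0))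
              (extendMsg (fun p : Fin (S.SA n) => S.sem ((p : ℕ) / S.L.Nm + 1)
                ⟨(p : ℕ) % S.L.Nm, Nat.mod_lt _ hNm⟩)) (i : ℕ)).length = S.L.K n :=
          List.length_ofFn
        omega
      · intro i h1 h2
        rw [List.getElem_take, List.getElem_ofFn]
        have hiK : i < S.L.K n := by
          simpa using h2
        match i with
        | 0 => rfl
        | (i + 1) =>
          rw [List.getElem_cons_succ]
          refine (List.getElem_ofFn ..).trans ?_
          funext j
          show extendMsg _ (i * S.L.Nm + (j : ℕ)) = S.sem (i + 1) j
          have hlt : i * S.L.Nm + (j : ℕ) < S.SA n :=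
            keyAr n i j j.isLt hiK
          unfold extendMsg
          rw [dif_pos hlt]
          have hp : i * S.L.Nm + (j : ℕ) = (j : ℕ) + S.L.Nm * i := by ring
          have hjlt : (j : ℕ) < S.L.Nm := j.isLt
          have hdiv : (i * S.L.Nm + (j : ℕ)) / S.L.Nm + 1 = i + 1 := by
            rw [hp, Nat.add_mul_div_left _ _ hNm, Nat.div_eq_of_lt hjlt]
            omega
          have hmod : (i * S.L.Nm + (j : ℕ)) % S.L.Nm = (j : ℕ) := by
            rw [hp, Nat.add_mul_mod_self_left]
            exact Nat.mod_eq_of_lt hjlt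
          show S.sem ((i * S.L.Nm + (j : ℕ)) / S.L.Nm + 1)
              ⟨(i * S.L.Nm + (j : ℕ)) % S.L.Nm, Nat.mod_lt _ hNm⟩ = S.sem (i + 1) j
          congr 1
          exact Fin.ext hmod
    rw [buffered_outDist S.L (S.sem 0) _ S.sem n hlist]
    exact S.close n
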